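/- Let θ : A → A^λ be a primitive substitution of constant length λ ≥ 2 with θ(a₀)_0 = a₀ for some a₀ ∈ A, let h = h(θ) be its height and θ^{(h)} its pure base. Then c(θ) = h(θ) · c(θ^{(h)}); in particular, h(θ) divides c(θ). -/

import Mathlib

open Filter Topology

/-- `substIter θ l k a j` is the `j`-th letter of `θ^k(a)`, where `θ : A → A^l` is a
substitution of constant length `l` (the letters of `θ(a)` being `θ a 0, …, θ a (l-1)`).
It is meaningful for `j < l ^ k` and satisfies
`θ^{k+1}(a)_{j'·l + r} = θ(θ^k(a)_{j'})_r`. -/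
def substIter {A : Type*} (θ : A → ℕ → A) (l : ℕ) : ℕ → A → ℕ → A
  | 0, a, _ => a
  | k + 1, a, j => θ (substIter θ l k a (j / l)) (j % l)

/-- A substitution of constant length `l` is primitive if some iterate of every letter
contains every letter. -/
def SubstPrimitive {A : Type*} (θ : A → ℕ → A) (l : ℕ) : Prop :=
  ∃ k, 1 ≤ k ∧ ∀ a b : A, ∃ j, j < l ^ k ∧ substIter θ l k a j = b

/-- Primitivity of a substitution restricted to a sub-alphabet `S`. -/
def SubstPrimitiveOn {A : Type*} (θ : A → ℕ → A) (l : ℕ) (S : Set A) : Prop :=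
  ∃ k, 1 ≤ k ∧ ∀ a ∈ S, ∀ b ∈ S, ∃ j, j < l ^ k ∧ substIter θ l k a j = b

/-- The column number of a substitution of constant length `l`, restricted to the
sub-alphabet `S`: the minimal cardinality of a column set `{θ^k(a)_j : a ∈ S}`. -/
noncomputable def columnNumberOn {A : Type*} (θ : A → ℕ → A) (l : ℕ) (S : Set A) : ℕ :=
  sInf { n : ℕ | ∃ k, 1 ≤ k ∧ ∃ j, j < l ^ k ∧
    ((fun a => substIter θ l k a j) '' S).ncard = n }

/-- The column number `c(θ)` of a substitution of constant length `l`. -/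
noncomputable def columnNumber {A : Type*} (θ : A → ℕ → A) (l : ℕ) : ℕ :=
  columnNumberOn θ l Set.univ

/-- The one-sided fixed point `u` of `θ` obtained by iterating `θ` at a letter `a₀`
with `θ(a₀)_0 = a₀`: `u n = θ^k(a₀)_n` for any `k` with `n < l^k`. -/
def substFixedPoint {A : Type*} (θ : A → ℕ → A) (l : ℕ) (a₀ : A) : ℕ → A :=
  fun n => substIter θ l (n + 1) a₀ n

/-- The height `h(θ)`: the largest `m ≥ 1` coprime to `l` dividing
`gcd {r ≥ 1 : u[r] = u[0]}`, i.e. dividing every return time of `u[0]`. -/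
noncomputable def substHeight {A : Type*} (θ : A → ℕ → A) (l : ℕ) (a₀ : A) : ℕ :=
  sSup { m : ℕ | 1 ≤ m ∧ Nat.Coprime m l ∧
    ∀ r : ℕ, 1 ≤ r → substFixedPoint θ l a₀ r = substFixedPoint θ l a₀ 0 → m ∣ r }

/-- The subshift `X_θ ⊆ A^ℤ`: all `x` each of whose finite blocks occurs in some
`θ^k(a)`. -/
def subshift {A : Type*} (θ : A → ℕ → A) (l : ℕ) : Set (ℤ → A) :=
  { x | ∀ (i : ℤ) (n : ℕ), ∃ k, 1 ≤ k ∧ ∃ a : A, ∃ j : ℕ, j + n ≤ l ^ k ∧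
      ∀ m : ℕ, m < n → x (i + (m : ℤ)) = substIter θ l k a (j + m) }

/-- The subshift `X_x ⊆ A^ℤ` generated by a one-sided sequence `x ∈ A^ℕ`: all `z`
each of whose finite blocks occurs in `x`. -/
def subshiftOf {A : Type*} (x : ℕ → A) : Set (ℤ → A) :=
  { z | ∀ (i : ℤ) (n : ℕ), ∃ j : ℕ, ∀ m : ℕ, m < n → z (i + (m : ℤ)) = x (j + m) }

/-- The left shift on `A^ℤ`. -/
def shift {A : Type*} (x : ℤ → A) : ℤ → A := fun n => x (n + 1)

/-- A bounded arithmetic function. -/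
def BoundedSeq (u : ℕ → ℂ) : Prop := ∃ C : ℝ, ∀ n, ‖u n‖ ≤ C

/-- A multiplicative arithmetic function: `u(mn) = u(m)u(n)` for coprime `m, n`. -/
def MultiplicativeSeq (u : ℕ → ℂ) : Prop :=
  ∀ m n : ℕ, Nat.Coprime m n → u (m * n) = u m * u n

/-- An aperiodic arithmetic function: zero mean along every arithmetic progression. -/
def AperiodicSeq (u : ℕ → ℂ) : Prop :=
  ∀ a b : ℕ, 1 ≤ a →
    Tendsto (fun N : ℕ => (N : ℂ)⁻¹ * ∑ n ∈ Finset.Icc 1 N, u (a * n + b)) atTop (nhds 0)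

/-- The Weyl pseudo-metric
`d_W(x,y) = limsup_N sup_{ℓ ≥ 1} (1/N)·#{ℓ ≤ n < ℓ+N : x n ≠ y n}`. -/
noncomputable def weylDist {B : Type*} (x y : ℕ → B) : ℝ :=
  limsup (fun N : ℕ =>
    ⨆ ℓ : ℕ, ⨆ _ : 1 ≤ ℓ,
      (({ n : ℕ | ℓ ≤ n ∧ n < ℓ + N ∧ x n ≠ y n }.ncard : ℝ) / N)) atTop

/-- A periodic sequence. -/
def IsPeriodicSeq {B : Type*} (v : ℕ → B) : Prop :=
  ∃ p, 1 ≤ p ∧ ∀ n, v (n + p) = v n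

/-- Weyl rational almost periodicity: a `d_W`-limit of periodic sequences. -/
def WRAPSeq {B : Type*} (x : ℕ → B) : Prop :=
  ∀ ε : ℝ, 0 < ε → ∃ v : ℕ → B, IsPeriodicSeq v ∧ weylDist x v < ε

/-- The family `𝒳(θ)` of column sets realizing the column number of `θ`. -/
noncomputable def columnSets {A : Type*} (θ : A → ℕ → A) (l : ℕ) : Set (Set A) :=
  { M | (∃ k, 1 ≤ k ∧ ∃ j, j < l ^ k ∧ M = (fun a => substIter θ l k a j) '' Set.univ) ∧
        M.ncard = columnNumber θ l }

/-- The synchronizing part `~θ` of `θ`, as a substitution on subsets of the alphabet: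
`~θ(M)_j = {θ(a)_j : a ∈ M}`. -/
def synchPart {A : Type*} (θ : A → ℕ → A) : Set A → ℕ → Set A :=
  fun M j => (fun a => θ a j) '' M

/-- The joining `θ ∨ ζ` of two substitutions of the same constant length. -/
def joinSub {A B : Type*} (θ : A → ℕ → A) (ζ : B → ℕ → B) : A × B → ℕ → A × B :=
  fun p j => (θ p.1 j, ζ p.2 j)

/-- The pure base `θ^{(h)}` of `θ`: a substitution of length `l` on blocks of length `h`,
`θ^{(h)}(w)_j = θ(w)[jh, (j+1)h−1]`, where `θ(w)` is the concatenation
`θ(w_0)…θ(w_{h-1})`. -/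
def pureBase {A : Type*} (θ : A → ℕ → A) (l h : ℕ) : (Fin h → A) → ℕ → (Fin h → A) :=
  fun w j i => θ (w ⟨(j * h + i.val) / l % h, Nat.mod_lt _ i.pos⟩) ((j * h + i.val) % l)

/-- Iterated cocycle `σ^{(k)}`, with `σ^{(1)} = σ` and
`σ^{(k+1)}(M, j₁·l + j₂) = σ^{(k)}(M, j₁) ∘ σ(~θ^k(M)_{j₁}, j₂)`. -/
def sigmaIter {X : Type*} {c : ℕ} (tilde : X → ℕ → X)
    (σ : X → ℕ → Equiv.Perm (Fin c)) (l : ℕ) : ℕ → X → ℕ → Equiv.Perm (Fin c)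
  | 0, _, _ => 1
  | k + 1, M, j =>
      sigmaIter tilde σ l k M (j / l) * σ (substIter tilde l k M (j / l)) (j % l)

/-- The group extension substitution `Θ̂(g, M)_j = (g ∘ σ(M,j), ~θ(M)_j)`. -/
def hatTheta {X : Type*} {c : ℕ} (tilde : X → ℕ → X)
    (σ : X → ℕ → Equiv.Perm (Fin c)) : Equiv.Perm (Fin c) × X → ℕ → Equiv.Perm (Fin c) × X :=
  fun p j => (p.1 * σ p.2 j, tilde p.2 j)

/-- The group `G` generated by the cocycle values `σ(M, j)`, `M ∈ 𝒳`, `j < l`. -/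
def cocycleGroup {X : Type*} {c : ℕ} (σ : X → ℕ → Equiv.Perm (Fin c)) (l : ℕ) :
    Subgroup (Equiv.Perm (Fin c)) :=
  Subgroup.closure { g | ∃ M : X, ∃ j, j < l ∧ g = σ M j }

section DekkingAux

open Set

variable {A : Type*} {l : ℕ} {θ : A → ℕ → A} {a₀ : A}

lemma substIter_succ (θ : A → ℕ → A) (l k : ℕ) (a : A) (j : ℕ) :
    substIter θ l (k + 1) a j = θ (substIter θ l k a (j / l)) (j % l) := rfl

lemma substIter_add (θ : A → ℕ → A) (l : ℕ) (k₂ k₁ : ℕ) (a : A) (j : ℕ) :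
    substIter θ l (k₁ + k₂) a j
      = substIter θ l k₂ (substIter θ l k₁ a (j / l ^ k₂)) (j % l ^ k₂) := by
  induction k₂ generalizing j with
  | zero => simp [substIter]
  | succ k ih =>
      have h1 : j % l ^ (k + 1) % l = j % l :=
        Nat.mod_mod_of_dvd _ ⟨l ^ k, by rw [pow_succ]; ring⟩
      have h2 : j % l ^ (k + 1) / l = j / l % l ^ k := by
        rw [pow_succ']; exact Nat.mod_mul_right_div_self j l (l ^ k)
      have h3 : j / l / l ^ k = j / l ^ (k + 1) := by
        rw [Nat.div_div_eq_div_mul, pow_succ']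
      rw [Nat.add_succ, substIter_succ, ih (j / l), substIter_succ, h1, h2, h3]

lemma substIter_mul_add (θ : A → ℕ → A) (l : ℕ) (K₁ K₂ : ℕ) (a : A) (J₁ J₂ : ℕ)
    (h2 : J₂ < l ^ K₂) :
    substIter θ l (K₁ + K₂) a (J₁ * l ^ K₂ + J₂)
      = substIter θ l K₂ (substIter θ l K₁ a J₁) J₂ := by
  have hq : 0 < l ^ K₂ := lt_of_le_of_lt (Nat.zero_le _) h2
  have hd : (J₁ * l ^ K₂ + J₂) / l ^ K₂ = J₁ := by
    rw [add_comm, mul_comm, Nat.add_mul_div_left _ _ hq, Nat.div_eq_of_lt h2, zero_add]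
  have hm : (J₁ * l ^ K₂ + J₂) % l ^ K₂ = J₂ := by
    rw [add_comm, Nat.add_mul_mod_self_right, Nat.mod_eq_of_lt h2]
  rw [substIter_add, hd, hm]

lemma substFixedPoint_zero (hl : 2 ≤ l) (ha₀ : θ a₀ 0 = a₀) :
    substFixedPoint θ l a₀ 0 = a₀ := by
  show θ (substIter θ l 0 a₀ (0 / l)) (0 % l) = a₀
  simpa [substIter] using ha₀

lemma substIter_stable (hl : 2 ≤ l) (ha₀ : θ a₀ 0 = a₀) (k n : ℕ) (hn : n < l ^ k) :
    substIter θ l (k + 1) a₀ n = substIter θ l k a₀ n := by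
  induction k generalizing n with
  | zero =>
      have : n = 0 := by simpa using hn
      subst this
      show θ (substIter θ l 0 a₀ (0 / l)) (0 % l) = a₀
      simpa [substIter] using ha₀
  | succ k ih =>
      have hnl : n / l < l ^ k := by
        rw [Nat.div_lt_iff_lt_mul (by omega : 0 < l)]
        rw [pow_succ] at hn; exact hn
      show θ (substIter θ l (k + 1) a₀ (n / l)) (n % l)
          = θ (substIter θ l k a₀ (n / l)) (n % l)
      rw [ih (n / l) hnl]

lemma substFixedPoint_eq (hl : 2 ≤ l) (ha₀ : θ a₀ 0 = a₀) (k n : ℕ) (hn : n < l ^ k) :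
    substFixedPoint θ l a₀ n = substIter θ l k a₀ n := by
  have key : ∀ d k n, n < l ^ k → substIter θ l (k + d) a₀ n = substIter θ l k a₀ n := by
    intro d
    induction d with
    | zero => intro k n _; rfl
    | succ d ih =>
        intro k n hn
        have hn' : n < l ^ (k + d) :=
          lt_of_lt_of_le hn (Nat.pow_le_pow_right (by omega) (Nat.le_add_right _ _))
        rw [Nat.add_succ, substIter_stable hl ha₀ (k + d) n hn', ih k n hn]
  have h1 : n < l ^ (n + 1) :=
    lt_of_lt_of_le (Nat.lt_pow_self (n := n) (by omega))
      (Nat.pow_le_pow_right (by omega) (Nat.le_succ n))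
  show substIter θ l (n + 1) a₀ n = substIter θ l k a₀ n
  rcases le_total k (n + 1) with hk | hk
  · have := key (n + 1 - k) k n hn
    rw [Nat.add_sub_cancel' hk] at this
    exact this
  · have := key (k - (n + 1)) (n + 1) n h1
    rw [Nat.add_sub_cancel' hk] at this
    exact this.symm

lemma substFixedPoint_step (hl : 2 ≤ l) (ha₀ : θ a₀ 0 = a₀) (q r : ℕ) (hr : r < l) :
    substFixedPoint θ l a₀ (q * l + r) = θ (substFixedPoint θ l a₀ q) r := by
  have hq : q < l ^ (q + 1) :=
    lt_of_lt_of_le (Nat.lt_pow_self (n := q) (by omega))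
      (Nat.pow_le_pow_right (by omega) (Nat.le_succ q))
  have h2 : q * l + r < l ^ (q + 1 + 1) := by
    calc q * l + r < (q + 1) * l := by
          have : q * l + l ≤ (q + 1) * l := by rw [add_mul, one_mul]
          omega
    _ ≤ l ^ (q + 1) * l := Nat.mul_le_mul_right l hq
    _ = l ^ (q + 1 + 1) := (pow_succ l (q + 1)).symm
  rw [substFixedPoint_eq hl ha₀ (q + 1 + 1) _ h2, substFixedPoint_eq hl ha₀ (q + 1) q hq,
    substIter_succ]
  have hd : (q * l + r) / l = q := by
    rw [add_comm, mul_comm, Nat.add_mul_div_left _ _ (by omega : 0 < l),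
      Nat.div_eq_of_lt hr, zero_add]
  have hm : (q * l + r) % l = r := by
    rw [add_comm, Nat.add_mul_mod_self_right, Nat.mod_eq_of_lt hr]
  rw [hd, hm]

lemma substFixedPoint_mul_add (hl : 2 ≤ l) (ha₀ : θ a₀ 0 = a₀) (k n j : ℕ) (hj : j < l ^ k) :
    substFixedPoint θ l a₀ (n * l ^ k + j) = substIter θ l k (substFixedPoint θ l a₀ n) j := by
  induction k generalizing j with
  | zero =>
      have : j = 0 := by simpa using hj
      subst this
      simp [substIter]
  | succ k ih =>
      have hjl : j / l < l ^ k := by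
        rw [Nat.div_lt_iff_lt_mul (by omega : 0 < l)]
        rw [pow_succ] at hj; exact hj
      have e : n * l ^ (k + 1) + j = (n * l ^ k + j / l) * l + j % l := by
        have h1 : l * (j / l) + j % l = j := Nat.div_add_mod j l
        calc n * l ^ (k + 1) + j = n * (l ^ k * l) + (l * (j / l) + j % l) := by
              rw [h1, pow_succ]
        _ = (n * l ^ k + j / l) * l + j % l := by ring
      rw [e, substFixedPoint_step hl ha₀ _ _ (Nat.mod_lt _ (by omega)), ih (j / l) hjl,
        substIter_succ]

lemma exists_occ (hl : 2 ≤ l) (ha₀ : θ a₀ 0 = a₀) (hθ : SubstPrimitive θ l) (a : A) (n₀ : ℕ) :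
    ∃ n, n₀ ≤ n ∧ substFixedPoint θ l a₀ n = a := by
  obtain ⟨k, hk1, hk⟩ := hθ
  obtain ⟨j, hj, hja⟩ := hk (substFixedPoint θ l a₀ n₀) a
  refine ⟨n₀ * l ^ k + j, ?_, ?_⟩
  · have : n₀ * 1 ≤ n₀ * l ^ k := Nat.mul_le_mul_left n₀ (Nat.one_le_two_pow.trans
      (Nat.pow_le_pow_left (by omega) k))
    omega
  · rw [substFixedPoint_mul_add hl ha₀ k n₀ j hj, hja]

lemma substHeight_spec (hl : 2 ≤ l) (ha₀ : θ a₀ 0 = a₀) (hθ : SubstPrimitive θ l) :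
    1 ≤ substHeight θ l a₀ ∧ Nat.Coprime (substHeight θ l a₀) l ∧
      ∀ r : ℕ, substFixedPoint θ l a₀ r = a₀ → substHeight θ l a₀ ∣ r := by
  have hu0 : substFixedPoint θ l a₀ 0 = a₀ := substFixedPoint_zero hl ha₀
  obtain ⟨r₀, hr₀1, hr₀a⟩ := exists_occ hl ha₀ hθ a₀ 1
  set H := { m : ℕ | 1 ≤ m ∧ Nat.Coprime m l ∧
    ∀ r : ℕ, 1 ≤ r → substFixedPoint θ l a₀ r = substFixedPoint θ l a₀ 0 → m ∣ r } with hH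
  have hne : H.Nonempty := ⟨1, le_refl 1, Nat.coprime_one_left l, fun r _ _ => one_dvd r⟩
  have hbdd : BddAbove H := by
    refine ⟨r₀, fun m hm => ?_⟩
    exact Nat.le_of_dvd (by omega) (hm.2.2 r₀ hr₀1 (by rw [hr₀a, hu0]))
  have hmem : substHeight θ l a₀ ∈ H := Nat.sSup_mem hne hbdd
  refine ⟨hmem.1, hmem.2.1, ?_⟩
  intro r hr
  rcases Nat.eq_zero_or_pos r with h0 | hpos
  · subst h0; exact dvd_zero _
  · exact hmem.2.2 r hpos (by rw [hr, hu0])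

lemma class_congr (hl : 2 ≤ l) (ha₀ : θ a₀ 0 = a₀) (hθ : SubstPrimitive θ l) (m n : ℕ)
    (hmn : substFixedPoint θ l a₀ m = substFixedPoint θ l a₀ n) :
    m ≡ n [MOD substHeight θ l a₀] := by
  obtain ⟨h1, hcop, hdvd⟩ := substHeight_spec hl ha₀ hθ
  set h := substHeight θ l a₀ with hh
  obtain ⟨k₀, hk₀1, hk₀⟩ := hθ
  set t := Nat.totient h with ht
  have htpos : 0 < t := Nat.totient_pos.mpr (by omega)
  set k := t * k₀ with hk
  have hkk₀ : k₀ ≤ k := Nat.le_mul_of_pos_left k₀ htpos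
  have hk1 : 1 ≤ k := le_trans hk₀1 hkk₀
  have hlk : l ^ k ≡ 1 [MOD h] := by
    have h2 : l ^ t ≡ 1 [MOD h] := Nat.ModEq.pow_totient (Nat.Coprime.symm hcop)
    calc l ^ k = (l ^ t) ^ k₀ := by rw [hk, pow_mul]
    _ ≡ 1 ^ k₀ [MOD h] := h2.pow k₀
    _ = 1 := one_pow k₀
  have hext : ∀ b : A, ∃ j, j < l ^ k ∧ substIter θ l k b j = a₀ := by
    intro b
    obtain ⟨j, hj, hja⟩ := hk₀ (substIter θ l (k - k₀) b 0) a₀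
    refine ⟨j, lt_of_lt_of_le hj (Nat.pow_le_pow_right (by omega) hkk₀), ?_⟩
    have he : k = (k - k₀) + k₀ := (Nat.sub_add_cancel hkk₀).symm
    rw [he, substIter_add, Nat.div_eq_of_lt hj, Nat.mod_eq_of_lt hj, hja]
  obtain ⟨j, hj, hjm⟩ := hext (substFixedPoint θ l a₀ m)
  have o1 : substFixedPoint θ l a₀ (m * l ^ k + j) = a₀ := by
    rw [substFixedPoint_mul_add hl ha₀ k m j hj]; exact hjm
  have o2 : substFixedPoint θ l a₀ (n * l ^ k + j) = a₀ := by
    rw [substFixedPoint_mul_add hl ha₀ k n j hj, ← hmn]; exact hjm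
  have d1 : h ∣ m * l ^ k + j := hdvd _ o1
  have d2 : h ∣ n * l ^ k + j := hdvd _ o2
  have e1 : m * l ^ k + j ≡ n * l ^ k + j [MOD h] :=
    (Nat.modEq_zero_iff_dvd.mpr d1).trans (Nat.modEq_zero_iff_dvd.mpr d2).symm
  have e2 : m * l ^ k ≡ n * l ^ k [MOD h] := Nat.ModEq.add_right_cancel' j e1
  have e2' : l ^ k * m ≡ l ^ k * n [MOD h] := by rwa [mul_comm m, mul_comm n] at e2
  exact Nat.ModEq.cancel_left_of_coprime (Nat.Coprime.pow_right k hcop) e2'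

/-- The sub-alphabet of letters of the fixed point occurring at positions `≡ c` mod the
height. -/
def substAcl (θ : A → ℕ → A) (l : ℕ) (a₀ : A) (c : ℕ) : Set A :=
  {a | ∃ n, substFixedPoint θ l a₀ n = a ∧ n % substHeight θ l a₀ = c % substHeight θ l a₀}

/-- The minimal column cardinality over the sub-alphabet `substAcl θ l a₀ c`. -/
noncomputable def substGamma (θ : A → ℕ → A) (l : ℕ) (a₀ : A) (c : ℕ) : ℕ :=
  sInf {n : ℕ | ∃ K, 1 ≤ K ∧ ∃ J, J < l ^ K ∧
    ((fun a => substIter θ l K a J) '' substAcl θ l a₀ c).ncard = n}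

lemma mem_substAcl (n : ℕ) : substFixedPoint θ l a₀ n ∈ substAcl θ l a₀ n := ⟨n, rfl, rfl⟩

lemma substAcl_congr {c c' : ℕ} (hcc : c ≡ c' [MOD substHeight θ l a₀]) :
    substAcl θ l a₀ c = substAcl θ l a₀ c' := by
  unfold substAcl
  ext a
  constructor <;> rintro ⟨n, hn, hmod⟩
  · exact ⟨n, hn, hmod.trans hcc⟩
  · exact ⟨n, hn, hmod.trans hcc.symm⟩

lemma substAcl_disjoint (hl : 2 ≤ l) (ha₀ : θ a₀ 0 = a₀) (hθ : SubstPrimitive θ l)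
    {c c' : ℕ} (hcc : ¬ c ≡ c' [MOD substHeight θ l a₀]) :
    Disjoint (substAcl θ l a₀ c) (substAcl θ l a₀ c') := by
  rw [Set.disjoint_left]
  rintro a ⟨n, hn, hmod⟩ ⟨n', hn', hmod'⟩
  exact hcc (((hmod.symm.trans (class_congr hl ha₀ hθ n n' (hn.trans hn'.symm))).symm).symm.trans hmod')

lemma substAcl_image (hl : 2 ≤ l) (ha₀ : θ a₀ 0 = a₀) {c K J : ℕ} (hJ : J < l ^ K)
    {a : A} (ha : a ∈ substAcl θ l a₀ c) :
    substIter θ l K a J ∈ substAcl θ l a₀ (c * l ^ K + J) := by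
  obtain ⟨n, hn, hmod⟩ := ha
  refine ⟨n * l ^ K + J, ?_, ?_⟩
  · rw [substFixedPoint_mul_add hl ha₀ K n J hJ, hn]
  · exact Nat.ModEq.add_right J (Nat.ModEq.mul_right (l ^ K) hmod)

lemma substAcl_eq_image (hl : 2 ≤ l) (ha₀ : θ a₀ 0 = a₀)
    {c : ℕ} (hc : c < substHeight θ l a₀) :
    substAcl θ l a₀ c
      = (fun m => substFixedPoint θ l a₀ (m * substHeight θ l a₀ + c)) '' Set.univ := by
  set h := substHeight θ l a₀ with hh
  ext a
  constructor
  · rintro ⟨n, hn, hmod⟩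
    refine ⟨n / h, Set.mem_univ _, ?_⟩
    have h1 : h * (n / h) + n % h = n := Nat.div_add_mod n h
    have h2 : n % h = c := by rw [hmod, Nat.mod_eq_of_lt hc]
    have h3 : n / h * h + c = n := by rw [mul_comm]; omega
    simpa [h3] using hn
  · rintro ⟨m, -, rfl⟩
    refine ⟨m * h + c, rfl, ?_⟩
    rw [add_comm, Nat.add_mul_mod_self_right]

lemma substAcl_cover (hl : 2 ≤ l) (ha₀ : θ a₀ 0 = a₀) (hθ : SubstPrimitive θ l) :
    (Set.univ : Set A) = ⋃ c ∈ Finset.range (substHeight θ l a₀), substAcl θ l a₀ c := by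
  have hpos : 0 < substHeight θ l a₀ := (substHeight_spec hl ha₀ hθ).1
  ext a
  simp only [Set.mem_univ, true_iff, Set.mem_iUnion, Finset.mem_range]
  obtain ⟨n, -, hn⟩ := exists_occ hl ha₀ hθ a 0
  refine ⟨n % substHeight θ l a₀, Nat.mod_lt _ hpos, n, hn, ?_⟩
  rw [Nat.mod_mod_of_dvd _ (dvd_refl _)]

lemma substIter_image_comp (θ : A → ℕ → A) (l : ℕ) (K₁ K₂ J₁ J₂ : ℕ) (hJ₂ : J₂ < l ^ K₂)
    (s : Set A) :
    (fun a => substIter θ l (K₁ + K₂) a (J₁ * l ^ K₂ + J₂)) '' s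
      = (fun x => substIter θ l K₂ x J₂) '' ((fun a => substIter θ l K₁ a J₁) '' s) := by
  rw [Set.image_image]
  apply Set.image_congr
  intro a _
  exact substIter_mul_add θ l K₁ K₂ a J₁ J₂ hJ₂

variable [Finite A]

lemma substGamma_le (hl : 2 ≤ l) {c K J : ℕ} (hK : 1 ≤ K) (hJ : J < l ^ K) :
    substGamma θ l a₀ c ≤ ((fun a => substIter θ l K a J) '' substAcl θ l a₀ c).ncard :=
  Nat.sInf_le ⟨K, hK, J, hJ, rfl⟩

lemma substGamma_spec (hl : 2 ≤ l) (c : ℕ) :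
    ∃ K, 1 ≤ K ∧ ∃ J, J < l ^ K ∧
      ((fun a => substIter θ l K a J) '' substAcl θ l a₀ c).ncard = substGamma θ l a₀ c := by
  unfold substGamma
  have hne : {n : ℕ | ∃ K, 1 ≤ K ∧ ∃ J, J < l ^ K ∧
      ((fun a => substIter θ l K a J) '' substAcl θ l a₀ c).ncard = n}.Nonempty :=
    ⟨((fun a => substIter θ l 1 a 0) '' substAcl θ l a₀ c).ncard,
      ⟨1, le_refl 1, 0, by rw [pow_one]; omega, rfl⟩⟩
  exact Nat.sInf_mem hne

lemma substGamma_const (hl : 2 ≤ l) (ha₀ : θ a₀ 0 = a₀) (hθ : SubstPrimitive θ l) (c c' : ℕ) :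
    substGamma θ l a₀ c = substGamma θ l a₀ c' := by
  obtain ⟨hpos, hcop, -⟩ := substHeight_spec hl ha₀ hθ
  -- it suffices to prove ≤ for arbitrary pairs
  suffices key : ∀ c c' : ℕ, substGamma θ l a₀ c ≤ substGamma θ l a₀ c' by
    exact le_antisymm (key c c') (key c' c)
  clear c c'
  intro c c'
  set h := substHeight θ l a₀ with hh
  set K₁ := h with hK₁
  have hlh : h < l ^ K₁ :=
    lt_of_lt_of_le (Nat.lt_two_pow_self (n := h)) (Nat.pow_le_pow_left hl h)
  set t := c * l ^ K₁ % h with hts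
  set J₁ := (c' % h + (h - t)) % h with hJ₁s
  have hJ₁h : J₁ < h := Nat.mod_lt _ hpos
  have hJ₁ : J₁ < l ^ K₁ := lt_trans hJ₁h hlh
  have hclass : c * l ^ K₁ + J₁ ≡ c' [MOD h] := by
    have htlt : t < h := Nat.mod_lt _ hpos
    have e1 : c * l ^ K₁ + J₁ ≡ t + (c' % h + (h - t)) [MOD h] :=
      Nat.ModEq.add (Nat.mod_modEq _ h).symm (Nat.mod_modEq _ h)
    have e2 : t + (c' % h + (h - t)) = c' % h + h := by omega
    have e3 : (c' % h + h) ≡ c' [MOD h] := by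
      show (c' % h + h) % h = c' % h
      rw [Nat.add_mod_right, Nat.mod_mod_of_dvd _ (dvd_refl h)]
    exact (e1.trans (by rw [e2])).trans e3
  obtain ⟨K₂, hK₂1, J₂, hJ₂, hmin⟩ := substGamma_spec (θ := θ) (a₀ := a₀) hl c'
  have himg : (fun a => substIter θ l K₁ a J₁) '' substAcl θ l a₀ c ⊆ substAcl θ l a₀ c' := by
    rintro x ⟨a, ha, rfl⟩
    have := substAcl_image hl ha₀ hJ₁ ha
    rwa [substAcl_congr hclass] at this
  have hJ : J₁ * l ^ K₂ + J₂ < l ^ (K₁ + K₂) := by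
    have h1 : J₁ + 1 ≤ l ^ K₁ := hJ₁
    calc J₁ * l ^ K₂ + J₂ < J₁ * l ^ K₂ + l ^ K₂ := by omega
    _ = (J₁ + 1) * l ^ K₂ := by ring
    _ ≤ l ^ K₁ * l ^ K₂ := Nat.mul_le_mul_right _ h1
    _ = l ^ (K₁ + K₂) := (pow_add l K₁ K₂).symm
  have hle := substGamma_le (θ := θ) (a₀ := a₀) (c := c) hl
      (le_trans hK₂1 (Nat.le_add_left K₂ K₁)) hJ
  refine le_trans hle ?_
  rw [substIter_image_comp θ l K₁ K₂ J₁ J₂ hJ₂]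
  calc ((fun x => substIter θ l K₂ x J₂) '' ((fun a => substIter θ l K₁ a J₁) '' substAcl θ l a₀ c)).ncard
      ≤ ((fun x => substIter θ l K₂ x J₂) '' substAcl θ l a₀ c').ncard :=
        Set.ncard_le_ncard (Set.image_mono himg) (Set.toFinite _)
  _ = substGamma θ l a₀ c' := hmin

lemma substInjOn_minimal (hl : 2 ≤ l) {c K J : ℕ} (hK : 1 ≤ K) (hJ : J < l ^ K)
    (hmin : ((fun a => substIter θ l K a J) '' substAcl θ l a₀ c).ncard = substGamma θ l a₀ c)
    {K' J' : ℕ} (hK' : 1 ≤ K') (hJ' : J' < l ^ K') :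
    Set.InjOn (fun x => substIter θ l K' x J')
      ((fun a => substIter θ l K a J) '' substAcl θ l a₀ c) := by
  apply Set.injOn_of_ncard_image_eq _ (Set.toFinite _)
  rw [hmin]
  apply le_antisymm
  · rw [← hmin]; exact Set.ncard_image_le (Set.toFinite _)
  · have hcomp := substIter_image_comp θ l K K' J J' hJ' (substAcl θ l a₀ c)
    rw [← hcomp]
    have hJJ : J * l ^ K' + J' < l ^ (K + K') := by
      have h1 : J + 1 ≤ l ^ K := hJ
      calc J * l ^ K' + J' < J * l ^ K' + l ^ K' := by omega
      _ = (J + 1) * l ^ K' := by ring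
      _ ≤ l ^ K * l ^ K' := Nat.mul_le_mul_right _ h1
      _ = l ^ (K + K') := (pow_add l K K').symm
    exact substGamma_le hl (le_trans hK (Nat.le_add_right K K')) hJJ

lemma mul_pow_add_lt {l K K₂ J J₂ : ℕ} (hJ : J < l ^ K) (hJ₂ : J₂ < l ^ K₂) :
    J * l ^ K₂ + J₂ < l ^ (K + K₂) := by
  have h1 : J + 1 ≤ l ^ K := hJ
  calc J * l ^ K₂ + J₂ < J * l ^ K₂ + l ^ K₂ := by omega
  _ = (J + 1) * l ^ K₂ := by ring
  _ ≤ l ^ K * l ^ K₂ := Nat.mul_le_mul_right _ h1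
  _ = l ^ (K + K₂) := (pow_add l K K₂).symm

lemma exists_simul (hl : 2 ≤ l) (ha₀ : θ a₀ 0 = a₀) (hθ : SubstPrimitive θ l) :
    ∃ K, 1 ≤ K ∧ ∃ J, J < l ^ K ∧ ∀ c : ℕ,
      ((fun a => substIter θ l K a J) '' substAcl θ l a₀ c).ncard = substGamma θ l a₀ c := by
  have hpos : 0 < substHeight θ l a₀ := (substHeight_spec hl ha₀ hθ).1
  suffices key : ∀ t, ∃ K, 1 ≤ K ∧ ∃ J, J < l ^ K ∧ ∀ c < t,
      ((fun a => substIter θ l K a J) '' substAcl θ l a₀ c).ncard = substGamma θ l a₀ c by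
    obtain ⟨K, hK, J, hJ, hc⟩ := key (substHeight θ l a₀)
    refine ⟨K, hK, J, hJ, fun c => ?_⟩
    have h1 : substAcl θ l a₀ c = substAcl θ l a₀ (c % substHeight θ l a₀) :=
      substAcl_congr (Nat.mod_modEq c _).symm
    rw [h1, substGamma_const hl ha₀ hθ c (c % substHeight θ l a₀)]
    exact hc _ (Nat.mod_lt _ hpos)
  intro t
  induction t with
  | zero =>
      exact ⟨1, le_refl 1, 0, by rw [pow_one]; omega, fun c hc => absurd hc (by omega)⟩
  | succ t ih =>
      obtain ⟨K, hK, J, hJ, hc⟩ := ih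
      obtain ⟨K₂, hK₂, J₂, hJ₂, hmin₂⟩ :=
        substGamma_spec (θ := θ) (a₀ := a₀) hl (t * l ^ K + J)
      have hJJ : J * l ^ K₂ + J₂ < l ^ (K + K₂) := mul_pow_add_lt hJ hJ₂
      refine ⟨K + K₂, le_trans hK (Nat.le_add_right _ _), J * l ^ K₂ + J₂, hJJ, ?_⟩
      intro c hct
      rcases Nat.lt_or_ge c t with hct' | hct'
      · have hminc := hc c hct'
        have hinj := substInjOn_minimal hl hK hJ hminc hK₂ hJ₂
        rw [substIter_image_comp θ l K K₂ J J₂ hJ₂, Set.ncard_image_of_injOn hinj, hminc]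
      · have hceq : c = t := by omega
        subst hceq
        apply le_antisymm
        · have hsub : (fun a => substIter θ l K a J) '' substAcl θ l a₀ c
              ⊆ substAcl θ l a₀ (c * l ^ K + J) := by
            rintro x ⟨a, ha, rfl⟩
            exact substAcl_image hl ha₀ hJ ha
          calc ((fun a => substIter θ l (K + K₂) a (J * l ^ K₂ + J₂)) '' substAcl θ l a₀ c).ncard
              = ((fun x => substIter θ l K₂ x J₂) ''
                  ((fun a => substIter θ l K a J) '' substAcl θ l a₀ c)).ncard := by
                rw [substIter_image_comp θ l K K₂ J J₂ hJ₂]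
          _ ≤ ((fun x => substIter θ l K₂ x J₂) '' substAcl θ l a₀ (c * l ^ K + J)).ncard :=
                Set.ncard_le_ncard (Set.image_mono hsub) (Set.toFinite _)
          _ = substGamma θ l a₀ (c * l ^ K + J) := hmin₂
          _ = substGamma θ l a₀ c := substGamma_const hl ha₀ hθ _ c
        · exact substGamma_le hl (le_trans hK (Nat.le_add_right _ _)) hJJ

lemma ncard_biUnion_of_disjoint (s : Finset ℕ) (t : ℕ → Set A)
    (hdisj : ∀ i ∈ s, ∀ j ∈ s, i ≠ j → Disjoint (t i) (t j)) :
    (⋃ i ∈ s, t i).ncard = ∑ i ∈ s, (t i).ncard := by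
  classical
  induction s using Finset.induction_on with
  | empty => simp
  | @insert a s ha ih =>
      rw [Finset.set_biUnion_insert, Finset.sum_insert ha,
        Set.ncard_union_eq ?_ (Set.toFinite _) (Set.toFinite _),
        ih (fun i hi j hj hij => hdisj i (Finset.mem_insert_of_mem hi)
          j (Finset.mem_insert_of_mem hj) hij)]
      rw [Set.disjoint_iUnion₂_right]
      intro i hi
      exact hdisj a (Finset.mem_insert_self a s) i (Finset.mem_insert_of_mem hi)
        (fun he => ha (he ▸ hi))

lemma col_eq_sum (hl : 2 ≤ l) (ha₀ : θ a₀ 0 = a₀) (hθ : SubstPrimitive θ l)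
    (K J : ℕ) (hJ : J < l ^ K) :
    ((fun a => substIter θ l K a J) '' Set.univ).ncard
      = ∑ c ∈ Finset.range (substHeight θ l a₀),
          ((fun a => substIter θ l K a J) '' substAcl θ l a₀ c).ncard := by
  obtain ⟨hpos, hcop, -⟩ := substHeight_spec hl ha₀ hθ
  rw [substAcl_cover hl ha₀ hθ, Set.image_iUnion₂]
  apply ncard_biUnion_of_disjoint
  intro c hc c' hc' hne
  rw [Finset.mem_range] at hc hc'
  have h1 : (fun a => substIter θ l K a J) '' substAcl θ l a₀ c
      ⊆ substAcl θ l a₀ (c * l ^ K + J) := by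
    rintro x ⟨a, ha, rfl⟩; exact substAcl_image hl ha₀ hJ ha
  have h2 : (fun a => substIter θ l K a J) '' substAcl θ l a₀ c'
      ⊆ substAcl θ l a₀ (c' * l ^ K + J) := by
    rintro x ⟨a, ha, rfl⟩; exact substAcl_image hl ha₀ hJ ha
  refine Set.disjoint_of_subset h1 h2 (substAcl_disjoint hl ha₀ hθ ?_)
  intro he
  have e2 : c * l ^ K ≡ c' * l ^ K [MOD substHeight θ l a₀] :=
    Nat.ModEq.add_right_cancel' J he
  have e2' : l ^ K * c ≡ l ^ K * c' [MOD substHeight θ l a₀] := by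
    rwa [mul_comm c, mul_comm c'] at e2
  have e3 : c ≡ c' [MOD substHeight θ l a₀] :=
    Nat.ModEq.cancel_left_of_coprime (Nat.Coprime.pow_right K hcop) e2'
  have : c = c' := by
    have := e3
    unfold Nat.ModEq at this
    rw [Nat.mod_eq_of_lt hc, Nat.mod_eq_of_lt hc'] at this
    exact this
  exact hne this

lemma columnNumber_eq_mul (hl : 2 ≤ l) (ha₀ : θ a₀ 0 = a₀) (hθ : SubstPrimitive θ l) :
    columnNumber θ l = substHeight θ l a₀ * substGamma θ l a₀ 0 := by
  set h := substHeight θ l a₀ with hh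
  set γ := substGamma θ l a₀ 0 with hγ
  have hsum : ∀ K J : ℕ, 1 ≤ K → J < l ^ K →
      h * γ ≤ ((fun a => substIter θ l K a J) '' Set.univ).ncard := by
    intro K J hK hJ
    rw [col_eq_sum hl ha₀ hθ K J hJ]
    calc h * γ = ∑ _c ∈ Finset.range h, γ := by
          rw [Finset.sum_const, Finset.card_range, smul_eq_mul]
    _ ≤ ∑ c ∈ Finset.range h, ((fun a => substIter θ l K a J) '' substAcl θ l a₀ c).ncard := by
          apply Finset.sum_le_sum
          intro c _
          rw [hγ, substGamma_const hl ha₀ hθ 0 c]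
          exact substGamma_le hl hK hJ
  obtain ⟨K, hK, J, hJ, hall⟩ := exists_simul hl ha₀ hθ
  have hval : ((fun a => substIter θ l K a J) '' Set.univ).ncard = h * γ := by
    rw [col_eq_sum hl ha₀ hθ K J hJ]
    calc ∑ c ∈ Finset.range h, ((fun a => substIter θ l K a J) '' substAcl θ l a₀ c).ncard
        = ∑ _c ∈ Finset.range h, γ := by
          apply Finset.sum_congr rfl
          intro c _
          rw [hall c, hγ, substGamma_const hl ha₀ hθ c 0]
    _ = h * γ := by rw [Finset.sum_const, Finset.card_range, smul_eq_mul]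
  have hmem : h * γ ∈ {n : ℕ | ∃ k, 1 ≤ k ∧ ∃ j, j < l ^ k ∧
      ((fun a => substIter θ l k a j) '' Set.univ).ncard = n} := ⟨K, hK, J, hJ, hval⟩
  show sInf _ = h * γ
  apply le_antisymm (Nat.sInf_le hmem)
  have hsinf := Nat.sInf_mem ⟨h * γ, hmem⟩
  obtain ⟨K', hK', J', hJ', hv'⟩ := hsinf
  rw [← hv']
  exact hsum K' J' hK' hJ'

lemma pureBase_block (hl : 2 ≤ l) (ha₀ : θ a₀ 0 = a₀) {h : ℕ} (hpos : 0 < h)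
    (m j : ℕ) (hj : j < l) :
    pureBase θ l h (fun i => substFixedPoint θ l a₀ (m * h + i.val)) j
      = fun i => substFixedPoint θ l a₀ ((m * l + j) * h + i.val) := by
  funext i
  simp only [pureBase]
  have hil : i.val < h := i.isLt
  have hq : (j * h + i.val) / l < h := by
    rw [Nat.div_lt_iff_lt_mul (by omega : 0 < l)]
    calc j * h + i.val < j * h + h := by omega
    _ = (j + 1) * h := by ring
    _ ≤ l * h := Nat.mul_le_mul_right h hj
    _ = h * l := mul_comm l h
  rw [Nat.mod_eq_of_lt hq]
  rw [← substFixedPoint_step hl ha₀ (m * h + (j * h + i.val) / l) ((j * h + i.val) % l)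
    (Nat.mod_lt _ (by omega : 0 < l))]
  congr 1
  have hdm : l * ((j * h + i.val) / l) + (j * h + i.val) % l = j * h + i.val :=
    Nat.div_add_mod _ l
  calc (m * h + (j * h + i.val) / l) * l + (j * h + i.val) % l
      = m * (l * h) + (l * ((j * h + i.val) / l) + (j * h + i.val) % l) := by ring
  _ = m * (l * h) + (j * h + i.val) := by rw [hdm]
  _ = (m * l + j) * h + i.val := by ring

lemma pureBase_iter (hl : 2 ≤ l) (ha₀ : θ a₀ 0 = a₀) {h : ℕ} (hpos : 0 < h)
    (k m j : ℕ) (hj : j < l ^ k) :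
    substIter (pureBase θ l h) l k (fun i => substFixedPoint θ l a₀ (m * h + i.val)) j
      = fun i => substFixedPoint θ l a₀ ((m * l ^ k + j) * h + i.val) := by
  induction k generalizing j with
  | zero =>
      have : j = 0 := by simpa using hj
      subst this
      simp [substIter]
  | succ k ih =>
      have hjl : j / l < l ^ k := by
        rw [Nat.div_lt_iff_lt_mul (by omega : 0 < l)]
        rw [pow_succ] at hj; exact hj
      rw [substIter_succ, ih (j / l) hjl,
        pureBase_block hl ha₀ hpos (m * l ^ k + j / l) (j % l) (Nat.mod_lt _ (by omega))]
      have e : (m * l ^ k + j / l) * l + j % l = m * l ^ (k + 1) + j := by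
        have h1 : l * (j / l) + j % l = j := Nat.div_add_mod j l
        calc (m * l ^ k + j / l) * l + j % l
            = m * (l ^ k * l) + (l * (j / l) + j % l) := by ring
        _ = m * l ^ (k + 1) + j := by rw [h1, pow_succ]
      rw [e]

lemma pureBase_image (hl : 2 ≤ l) (ha₀ : θ a₀ 0 = a₀) (hθ : SubstPrimitive θ l)
    (k j : ℕ) (hj : j < l ^ k) :
    (fun w => substIter (pureBase θ l (substHeight θ l a₀)) l k w j) ''
        { w : Fin (substHeight θ l a₀) → A |
          ∃ m : ℕ, ∀ i : Fin (substHeight θ l a₀),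
            w i = substFixedPoint θ l a₀ (m * substHeight θ l a₀ + i.val) }
      = (fun m : ℕ => (fun i : Fin (substHeight θ l a₀) =>
          substFixedPoint θ l a₀ ((m * l ^ k + j) * substHeight θ l a₀ + i.val))) ''
          Set.univ := by
  have hpos : 0 < substHeight θ l a₀ := (substHeight_spec hl ha₀ hθ).1
  ext w
  simp only [Set.mem_image, Set.mem_univ, true_and, Set.mem_setOf_eq]
  constructor
  · rintro ⟨v, ⟨m, hm⟩, rfl⟩
    refine ⟨m, ?_⟩
    have hv : v = fun i => substFixedPoint θ l a₀ (m * substHeight θ l a₀ + i.val) :=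
      funext hm
    rw [hv, pureBase_iter hl ha₀ hpos k m j hj]
  · rintro ⟨m, rfl⟩
    exact ⟨fun i => substFixedPoint θ l a₀ (m * substHeight θ l a₀ + i.val),
      ⟨m, fun i => rfl⟩, pureBase_iter hl ha₀ hpos k m j hj⟩

lemma pureBase_lower (hl : 2 ≤ l) (ha₀ : θ a₀ 0 = a₀) (hθ : SubstPrimitive θ l)
    (k j : ℕ) (hk : 1 ≤ k) (hj : j < l ^ k) :
    substGamma θ l a₀ 0 ≤
      ((fun w => substIter (pureBase θ l (substHeight θ l a₀)) l k w j) ''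
        { w : Fin (substHeight θ l a₀) → A |
          ∃ m : ℕ, ∀ i : Fin (substHeight θ l a₀),
            w i = substFixedPoint θ l a₀ (m * substHeight θ l a₀ + i.val) }).ncard := by
  have hpos : 0 < substHeight θ l a₀ := (substHeight_spec hl ha₀ hθ).1
  have hlkpos : 0 < l ^ k := lt_of_le_of_lt (Nat.zero_le _) hj
  rw [pureBase_image hl ha₀ hθ k j hj]
  have hc₀ : j * substHeight θ l a₀ / l ^ k < substHeight θ l a₀ := by
    rw [Nat.div_lt_iff_lt_mul hlkpos, mul_comm (substHeight θ l a₀) (l ^ k)]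
    exact (Nat.mul_lt_mul_right hpos).mpr hj
  have hJ₀ : j * substHeight θ l a₀ % l ^ k < l ^ k := Nat.mod_lt _ hlkpos
  have hsplit : l ^ k * (j * substHeight θ l a₀ / l ^ k) + j * substHeight θ l a₀ % l ^ k
      = j * substHeight θ l a₀ := Nat.div_add_mod _ _
  calc substGamma θ l a₀ 0
      = substGamma θ l a₀ (j * substHeight θ l a₀ / l ^ k) := substGamma_const hl ha₀ hθ 0 _
  _ ≤ ((fun a => substIter θ l k a (j * substHeight θ l a₀ % l ^ k)) ''
        substAcl θ l a₀ (j * substHeight θ l a₀ / l ^ k)).ncard := substGamma_le hl hk hJ₀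
  _ = ((fun m : ℕ => substIter θ l k
        (substFixedPoint θ l a₀ (m * substHeight θ l a₀ + j * substHeight θ l a₀ / l ^ k))
        (j * substHeight θ l a₀ % l ^ k)) '' Set.univ).ncard := by
        rw [substAcl_eq_image hl ha₀ hc₀, Set.image_image]
  _ = ((fun m : ℕ => (fun i : Fin (substHeight θ l a₀) =>
        substFixedPoint θ l a₀ ((m * l ^ k + j) * substHeight θ l a₀ + i.val))
          ⟨0, hpos⟩) '' Set.univ).ncard := by
        apply congrArg
        apply Set.image_congr
        intro m _
        have hcoord : (m * l ^ k + j) * substHeight θ l a₀ + (⟨0, hpos⟩ : Fin _).val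
            = (m * substHeight θ l a₀ + j * substHeight θ l a₀ / l ^ k) * l ^ k
              + j * substHeight θ l a₀ % l ^ k := by
          show (m * l ^ k + j) * substHeight θ l a₀ + 0 = _
          calc (m * l ^ k + j) * substHeight θ l a₀ + 0
              = m * (substHeight θ l a₀ * l ^ k) + j * substHeight θ l a₀ := by ring
          _ = m * (substHeight θ l a₀ * l ^ k)
              + (l ^ k * (j * substHeight θ l a₀ / l ^ k)
                + j * substHeight θ l a₀ % l ^ k) := by rw [hsplit]
          _ = (m * substHeight θ l a₀ + j * substHeight θ l a₀ / l ^ k) * l ^ k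
                + j * substHeight θ l a₀ % l ^ k := by ring
        show _ = substFixedPoint θ l a₀
          ((m * l ^ k + j) * substHeight θ l a₀ + (⟨0, hpos⟩ : Fin (substHeight θ l a₀)).val)
        rw [hcoord, substFixedPoint_mul_add hl ha₀ k _ _ hJ₀]
  _ = ((fun w : Fin (substHeight θ l a₀) → A => w ⟨0, hpos⟩) ''
        ((fun m : ℕ => (fun i : Fin (substHeight θ l a₀) =>
          substFixedPoint θ l a₀ ((m * l ^ k + j) * substHeight θ l a₀ + i.val))) ''
            Set.univ)).ncard := by
        rw [Set.image_image]
  _ ≤ _ := Set.ncard_image_le (Set.toFinite _)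

lemma pureBase_upper (hl : 2 ≤ l) (ha₀ : θ a₀ 0 = a₀) (hθ : SubstPrimitive θ l) :
    ∃ k, 1 ≤ k ∧ ∃ j, j < l ^ k ∧
      ((fun w => substIter (pureBase θ l (substHeight θ l a₀)) l k w j) ''
        { w : Fin (substHeight θ l a₀) → A |
          ∃ m : ℕ, ∀ i : Fin (substHeight θ l a₀),
            w i = substFixedPoint θ l a₀ (m * substHeight θ l a₀ + i.val) }).ncard
        = substGamma θ l a₀ 0 := by
  have hpos : 0 < substHeight θ l a₀ := (substHeight_spec hl ha₀ hθ).1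
  obtain ⟨K₁, hK₁, J₁, hJ₁, hmin₁⟩ := substGamma_spec (θ := θ) (a₀ := a₀) hl 0
  set h := substHeight θ l a₀ with hh
  set K₂ := h + 1 with hK₂def
  have h2h : 2 * h ≤ l ^ K₂ := by
    have h1 : h < 2 ^ h := Nat.lt_two_pow_self (n := h)
    have h3 : 2 * h < 2 ^ K₂ := by
      rw [hK₂def, pow_succ, mul_comm (2 ^ h) 2]; omega
    have h2 : 2 ^ K₂ ≤ l ^ K₂ := Nat.pow_le_pow_left hl K₂
    omega
  set J₂ := (h - J₁ * l ^ K₂ % h) % h with hJ₂def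
  have hJ₂h : J₂ < h := Nat.mod_lt _ hpos
  have hJ₂lk : J₂ < l ^ K₂ := by omega
  have hdvd : h ∣ J₁ * l ^ K₂ + J₂ := by
    apply Nat.dvd_of_mod_eq_zero
    rw [Nat.add_mod, hJ₂def, Nat.mod_mod_of_dvd _ (dvd_refl h)]
    rcases Nat.eq_zero_or_pos (J₁ * l ^ K₂ % h) with h0 | hpos'
    · rw [h0, Nat.sub_zero, Nat.mod_self]; simp
    · have ht : J₁ * l ^ K₂ % h < h := Nat.mod_lt _ hpos
      rw [Nat.mod_eq_of_lt (by omega : h - J₁ * l ^ K₂ % h < h)]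
      have : J₁ * l ^ K₂ % h + (h - J₁ * l ^ K₂ % h) = h := by omega
      rw [this, Nat.mod_self]
  set j := (J₁ * l ^ K₂ + J₂) / h with hjdef
  have hjh : j * h = J₁ * l ^ K₂ + J₂ := Nat.div_mul_cancel hdvd
  have hjb : J₁ * l ^ K₂ + J₂ < l ^ (K₁ + K₂) := mul_pow_add_lt hJ₁ hJ₂lk
  have hjk : j < l ^ (K₁ + K₂) := by
    have : j ≤ j * h := Nat.le_mul_of_pos_right j hpos
    omega
  refine ⟨K₁ + K₂, le_trans hK₁ (Nat.le_add_right _ _), j, hjk, ?_⟩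
  rw [pureBase_image hl ha₀ hθ (K₁ + K₂) j hjk]
  -- identify the image with Ψ '' M
  have hcoord : ∀ (m : ℕ) (i : Fin h),
      substFixedPoint θ l a₀ ((m * l ^ (K₁ + K₂) + j) * h + i.val)
        = substIter θ l K₂ (substIter θ l K₁
            (substFixedPoint θ l a₀ (m * h + 0)) J₁) (J₂ + i.val) := by
    intro m i
    have hi : i.val < h := i.isLt
    have hJi : J₂ + i.val < l ^ K₂ := by omega
    have hri : J₁ * l ^ K₂ + (J₂ + i.val) < l ^ (K₁ + K₂) := mul_pow_add_lt hJ₁ hJi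
    have he : (m * l ^ (K₁ + K₂) + j) * h + i.val
        = (m * h + 0) * l ^ (K₁ + K₂) + (J₁ * l ^ K₂ + (J₂ + i.val)) := by
      calc (m * l ^ (K₁ + K₂) + j) * h + i.val
          = m * h * l ^ (K₁ + K₂) + (j * h + i.val) := by ring
      _ = m * h * l ^ (K₁ + K₂) + (J₁ * l ^ K₂ + J₂ + i.val) := by rw [hjh]
      _ = (m * h + 0) * l ^ (K₁ + K₂) + (J₁ * l ^ K₂ + (J₂ + i.val)) := by ring
    rw [he, substFixedPoint_mul_add hl ha₀ (K₁ + K₂) _ _ hri,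
      substIter_mul_add θ l K₁ K₂ _ J₁ (J₂ + i.val) hJi]
  have himg2 : (fun m : ℕ => (fun i : Fin h =>
        substFixedPoint θ l a₀ ((m * l ^ (K₁ + K₂) + j) * h + i.val))) '' Set.univ
      = (fun x : A => (fun i : Fin h => substIter θ l K₂ x (J₂ + i.val))) ''
          ((fun a => substIter θ l K₁ a J₁) '' substAcl θ l a₀ 0) := by
    rw [substAcl_eq_image hl ha₀ hpos, Set.image_image, Set.image_image]
    apply Set.image_congr
    intro m _
    funext i
    exact hcoord m i
  rw [himg2]
  have hinj0 : Set.InjOn (fun x => substIter θ l K₂ x J₂)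
      ((fun a => substIter θ l K₁ a J₁) '' substAcl θ l a₀ 0) :=
    substInjOn_minimal hl hK₁ hJ₁ hmin₁ (by omega) hJ₂lk
  have hinj : Set.InjOn (fun x : A => (fun i : Fin h => substIter θ l K₂ x (J₂ + i.val)))
      ((fun a => substIter θ l K₁ a J₁) '' substAcl θ l a₀ 0) := by
    intro x hx y hy hxy
    have h0 := congrFun hxy ⟨0, hpos⟩
    simp only at h0
    rw [Nat.add_zero] at h0
    exact hinj0 hx hy h0
  rw [Set.ncard_image_of_injOn hinj, hmin₁]

lemma pureBase_colOn (hl : 2 ≤ l) (ha₀ : θ a₀ 0 = a₀) (hθ : SubstPrimitive θ l) :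
    columnNumberOn (pureBase θ l (substHeight θ l a₀)) l
      { w : Fin (substHeight θ l a₀) → A |
        ∃ m : ℕ, ∀ i : Fin (substHeight θ l a₀),
          w i = substFixedPoint θ l a₀ (m * substHeight θ l a₀ + i.val) }
      = substGamma θ l a₀ 0 := by
  unfold columnNumberOn
  obtain ⟨K, hK, J, hJ, hval⟩ := pureBase_upper hl ha₀ hθ
  have hmem : substGamma θ l a₀ 0 ∈ {n : ℕ | ∃ k, 1 ≤ k ∧ ∃ j, j < l ^ k ∧
      ((fun w => substIter (pureBase θ l (substHeight θ l a₀)) l k w j) ''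
        { w : Fin (substHeight θ l a₀) → A |
          ∃ m : ℕ, ∀ i : Fin (substHeight θ l a₀),
            w i = substFixedPoint θ l a₀ (m * substHeight θ l a₀ + i.val) }).ncard = n} :=
    ⟨K, hK, J, hJ, hval⟩
  apply le_antisymm (Nat.sInf_le hmem)
  obtain ⟨k', hk', j', hj', hv'⟩ := Nat.sInf_mem ⟨_, hmem⟩
  rw [← hv']
  exact pureBase_lower hl ha₀ hθ k' j' hk' hj'

end DekkingAux
/-- For a primitive substitution `θ` of constant length with height
`h = h(θ)` and pure base `θ^{(h)}` (a substitution on the set of length-`h` blocks of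
the fixed point `u` starting at multiples of `h`), one has
`c(θ) = h(θ) · c(θ^{(h)})`; in particular `h(θ) ∣ c(θ)`. -/
theorem columnNumber_eq_height_mul_pureBase_columnNumber
    {A : Type*} [Finite A] (l : ℕ) (hl : 2 ≤ l)
    (θ : A → ℕ → A) (hθ : SubstPrimitive θ l)
    (a₀ : A) (ha₀ : θ a₀ 0 = a₀) :
    columnNumber θ l =
      substHeight θ l a₀ *
        columnNumberOn (pureBase θ l (substHeight θ l a₀)) l
          { w : Fin (substHeight θ l a₀) → A |
            ∃ m : ℕ, ∀ i : Fin (substHeight θ l a₀),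
              w i = substFixedPoint θ l a₀ (m * substHeight θ l a₀ + i.val) } ∧
    substHeight θ l a₀ ∣ columnNumber θ l := by
  constructor
  · rw [columnNumber_eq_mul hl ha₀ hθ, pureBase_colOn hl ha₀ hθ]
  · rw [columnNumber_eq_mul hl ha₀ hθ]
    exact dvd_mul_right _ _
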